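/- Let R be a K-domain graded by a lattice M, and let ψ : M → Γ be a group homomorphism into a totally ordered abelian group, Q a point of P^1, γ ∈ Γ with γ ≥ 0. Then the map v on the M-graded domain R = ⊕_u R_u with R localizing to K(P^1)[M], defined on homogeneous elements by v(f·χ^u) = ψ(u) + ord_Q(f)·γ and extended to arbitrary nonzero elements by v(f) = min_u v(f_u) over the homogeneous components f_u, is a K-valuation: v(fg) = v(f)+v(g) and v(f+g) ≥ min{v(f), v(g)}. -/

import Mathlib

/-- The order of vanishing of a rational function at a point of `ℙ¹`,
modeled as `Option K`: `some c` is the finite point `c`, `none` is `∞`. -/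
noncomputable def ordAt {K : Type*} [Field K] (Q : Option K) (f : RatFunc K) : ℤ :=
  match Q with
  | some c => (f.num.rootMultiplicity c : ℤ) - (f.denom.rootMultiplicity c : ℤ)
  | none => -f.intDegree

open Polynomial

namespace Stmt4Aux

open scoped Classical

variable {K : Type*} [Field K]

noncomputable def pord (Q : Option K) (p : K[X]) : ℤ :=
  match Q with
  | some c => (p.rootMultiplicity c : ℤ)
  | none => -(p.natDegree : ℤ)

noncomputable def plc (Q : Option K) (p : K[X]) : K :=
  match Q with
  | some c => (p /ₘ (X - C c) ^ (p.rootMultiplicity c)).eval c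
  | none => p.leadingCoeff

@[simp] theorem pord_some (c : K) (p : K[X]) :
    pord (some c) p = (p.rootMultiplicity c : ℤ) := rfl
@[simp] theorem pord_none (p : K[X]) :
    pord (none : Option K) p = -(p.natDegree : ℤ) := rfl

theorem plc_ne_zero (Q : Option K) {p : K[X]} (hp : p ≠ 0) : plc Q p ≠ 0 := by
  cases Q with
  | some c => exact Polynomial.eval_divByMonic_pow_rootMultiplicity_ne_zero c hp
  | none => exact Polynomial.leadingCoeff_ne_zero.mpr hp

theorem pord_mul (Q : Option K) {p q : K[X]} (hp : p ≠ 0) (hq : q ≠ 0) :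
    pord Q (p * q) = pord Q p + pord Q q := by
  cases Q with
  | some c =>
      simp only [pord, Polynomial.rootMultiplicity_mul (mul_ne_zero hp hq)]
      push_cast; ring
  | none =>
      simp only [pord, Polynomial.natDegree_mul hp hq]
      push_cast; ring

theorem divByMonic_rootMult_mul {c : K} {p q : K[X]} (hp : p ≠ 0) (hq : q ≠ 0) :
    (p * q) /ₘ (X - C c) ^ ((p * q).rootMultiplicity c) =
      (p /ₘ (X - C c) ^ (p.rootMultiplicity c)) * (q /ₘ (X - C c) ^ (q.rootMultiplicity c)) := by
  have hmon : ((X - C c) ^ ((p*q).rootMultiplicity c)).Monic := (monic_X_sub_C c).pow _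
  have h1 := Polynomial.pow_mul_divByMonic_rootMultiplicity_eq p c
  have h2 := Polynomial.pow_mul_divByMonic_rootMultiplicity_eq q c
  have hr : (p * q).rootMultiplicity c = p.rootMultiplicity c + q.rootMultiplicity c :=
    Polynomial.rootMultiplicity_mul (mul_ne_zero hp hq)
  have key : p * q = (X - C c) ^ (p.rootMultiplicity c + q.rootMultiplicity c) *
      ((p /ₘ (X - C c) ^ (p.rootMultiplicity c)) * (q /ₘ (X - C c) ^ (q.rootMultiplicity c))) := by
    rw [pow_add]
    conv_lhs => rw [← h1, ← h2]
    ring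
  rw [hr]
  conv_lhs => rw [key]
  exact Polynomial.mul_divByMonic_cancel_left _ ((monic_X_sub_C c).pow _)

theorem plc_mul (Q : Option K) {p q : K[X]} (hp : p ≠ 0) (hq : q ≠ 0) :
    plc Q (p * q) = plc Q p * plc Q q := by
  cases Q with
  | some c => simp [plc, divByMonic_rootMult_mul hp hq]
  | none => simp [plc, Polynomial.leadingCoeff_mul]

/-- Taylor expansion decomposition. -/
theorem taylor_factor (c : K) (p : K[X]) :
    (taylor c) p = (taylor c) (p /ₘ (X - C c) ^ (p.rootMultiplicity c)) *
      X ^ (p.rootMultiplicity c) := by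
  conv_lhs => rw [← Polynomial.pow_mul_divByMonic_rootMultiplicity_eq p c]
  rw [Polynomial.taylor_mul, mul_comm]
  congr 1
  rw [Polynomial.taylor_apply, Polynomial.pow_comp, Polynomial.sub_comp, Polynomial.X_comp,
    Polynomial.C_comp]
  simp

theorem taylor_coeff_lt {c : K} {p : K[X]} {k : ℕ} (hk : k < p.rootMultiplicity c) :
    ((taylor c) p).coeff k = 0 := by
  rw [taylor_factor c p, Polynomial.coeff_mul_X_pow', if_neg (by omega)]

theorem taylor_coeff_rootMult {c : K} (p : K[X]) :
    ((taylor c) p).coeff (p.rootMultiplicity c) = plc (some c) p := by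
  rw [taylor_factor c p, Polynomial.coeff_mul_X_pow', if_pos le_rfl, Nat.sub_self,
    Polynomial.taylor_coeff_zero]
  rfl

theorem rootMult_le_of_taylor {c : K} {p : K[X]} {n : ℕ} (hp : p ≠ 0)
    (h : ∀ k < n, ((taylor c) p).coeff k = 0) : n ≤ p.rootMultiplicity c := by
  by_contra hlt
  push_neg at hlt
  have := h _ hlt
  rw [taylor_coeff_rootMult] at this
  exact plc_ne_zero (some c) hp this


noncomputable def plcN (Q : Option K) (N : ℤ) (x : K[X]) : K :=
  if x ≠ 0 ∧ pord Q x = N then plc Q x else 0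

theorem plcN_eq_taylor {c : K} {N : ℤ} (hN : 0 ≤ N) {x : K[X]}
    (hx : x = 0 ∨ N ≤ pord (some c) x) :
    plcN (some c) N x = ((taylor c) x).coeff N.toNat := by
  rcases eq_or_ne x 0 with rfl | hx0
  · simp [plcN]
  · replace hx : N ≤ pord (some c) x := hx.resolve_left hx0
    have hle : N.toNat ≤ x.rootMultiplicity c := by
      simp only [pord_some] at hx; omega
    rcases eq_or_lt_of_le hle with heq | hlt
    · rw [heq, taylor_coeff_rootMult, plcN, if_pos]
      exact ⟨hx0, by simp only [pord_some]; omega⟩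
    · rw [taylor_coeff_lt hlt, plcN, if_neg]
      rintro ⟨-, h⟩
      simp only [pord_some] at h
      omega

theorem plcN_eq_coeff {N : ℤ} {x : K[X]}
    (hx : x = 0 ∨ N ≤ pord (none : Option K) x) :
    plcN none N x = x.coeff (-N).toNat := by
  rcases eq_or_ne x 0 with rfl | hx0
  · simp [plcN]
  · replace hx : N ≤ -(x.natDegree : ℤ) := hx.resolve_left hx0
    have hle : x.natDegree ≤ (-N).toNat := by omega
    rcases eq_or_lt_of_le hle with heq | hlt
    · rw [← heq, ← Polynomial.leadingCoeff, plcN, if_pos]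
      · rfl
      · exact ⟨hx0, by simp only [pord_none]; omega⟩
    · rw [Polynomial.coeff_eq_zero_of_natDegree_lt hlt, plcN, if_neg]
      rintro ⟨-, h⟩
      simp only [pord_none] at h
      omega

theorem padd (Q : Option K) (N : ℤ) {a b : K[X]}
    (ha : a = 0 ∨ N ≤ pord Q a) (hb : b = 0 ∨ N ≤ pord Q b) :
    (a + b = 0 ∨ N ≤ pord Q (a + b)) ∧ plcN Q N (a + b) = plcN Q N a + plcN Q N b := by
  cases Q with
  | some c =>
    rcases le_or_gt 0 N with hN | hN
    · have hfst : a + b = 0 ∨ N ≤ pord (some c) (a + b) := by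
        rcases eq_or_ne (a + b) 0 with h | h
        · exact Or.inl h
        · right
          simp only [pord_some]
          have hv : ∀ k < N.toNat, ((taylor c) (a + b)).coeff k = 0 := by
            intro k hk
            rw [map_add, coeff_add]
            have za : ((taylor c) a).coeff k = 0 := by
              rcases eq_or_ne a 0 with rfl | ha0
              · simp
              · refine taylor_coeff_lt ?_
                have := ha.resolve_left ha0
                simp only [pord_some] at this; omega
            have zb : ((taylor c) b).coeff k = 0 := by
              rcases eq_or_ne b 0 with rfl | hb0
              · simp
              · refine taylor_coeff_lt ?_
                have := hb.resolve_left hb0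
                simp only [pord_some] at this; omega
            rw [za, zb, add_zero]
          have := rootMult_le_of_taylor h hv
          omega
      refine ⟨hfst, ?_⟩
      rw [plcN_eq_taylor hN hfst, plcN_eq_taylor hN ha, plcN_eq_taylor hN hb, map_add, coeff_add]
    · have z : ∀ x : K[X], plcN (some c) N x = 0 := by
        intro x
        rw [plcN, if_neg]
        rintro ⟨-, h⟩
        simp only [pord_some] at h
        omega
      refine ⟨?_, by simp [z]⟩
      rcases eq_or_ne (a + b) 0 with h | h
      · exact Or.inl h
      · right; simp only [pord_some]; omega
  | none =>
    have hfst : a + b = 0 ∨ N ≤ pord (none : Option K) (a + b) := by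
      rcases eq_or_ne a 0 with rfl | ha0
      · rw [zero_add]; exact hb
      rcases eq_or_ne b 0 with rfl | hb0
      · rw [add_zero]; exact ha
      rcases eq_or_ne (a + b) 0 with h | h
      · exact Or.inl h
      · right
        simp only [pord_none]
        have h1 := Polynomial.natDegree_add_le a b
        have h2 := (ha.resolve_left ha0); have h3 := (hb.resolve_left hb0)
        simp only [pord_none] at h2 h3
        rcases max_cases a.natDegree b.natDegree with ⟨hm, -⟩ | ⟨hm, -⟩ <;> rw [hm] at h1 <;> omega
    refine ⟨hfst, ?_⟩
    rw [plcN_eq_coeff hfst, plcN_eq_coeff ha, plcN_eq_coeff hb, coeff_add]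


-- ### RatFunc level

theorem ordAt_eq (Q : Option K) (f : RatFunc K) :
    ordAt Q f = pord Q f.num - pord Q f.denom := by
  cases Q with
  | some c => rfl
  | none => simp only [ordAt, pord_none, RatFunc.intDegree]; ring

noncomputable def rlc (Q : Option K) (f : RatFunc K) : K := plc Q f.num / plc Q f.denom

noncomputable def OrdW (Q : Option K) (f : RatFunc K) : WithTop ℤ :=
  if f = 0 then ⊤ else (ordAt Q f : WithTop ℤ)

noncomputable def LC (Q : Option K) (m : ℤ) (f : RatFunc K) : K :=
  if OrdW Q f = (m : WithTop ℤ) then rlc Q f else 0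

theorem rlc_ne_zero (Q : Option K) {f : RatFunc K} (hf : f ≠ 0) : rlc Q f ≠ 0 :=
  div_ne_zero (plc_ne_zero Q (RatFunc.num_ne_zero hf)) (plc_ne_zero Q f.denom_ne_zero)

theorem OrdW_eq (Q : Option K) {f : RatFunc K} (hf : f ≠ 0) :
    OrdW Q f = (ordAt Q f : WithTop ℤ) := if_neg hf

theorem LC_eq_of_ordAt {Q : Option K} {m : ℤ} {f : RatFunc K} (hf : f ≠ 0)
    (h : ordAt Q f = m) : LC Q m f = rlc Q f := by
  rw [LC, if_pos (by rw [OrdW_eq Q hf, h])]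

theorem LC_eq_zero_of_ne {Q : Option K} {m : ℤ} {f : RatFunc K}
    (h : OrdW Q f ≠ (m : WithTop ℤ)) : LC Q m f = 0 := if_neg h

theorem ne_zero_of_LC {Q : Option K} {m : ℤ} {f : RatFunc K} (h : LC Q m f ≠ 0) :
    f ≠ 0 ∧ ordAt Q f = m := by
  have hO : OrdW Q f = (m : WithTop ℤ) := by
    by_contra hc; exact h (LC_eq_zero_of_ne hc)
  have hf : f ≠ 0 := by
    rintro rfl
    rw [OrdW, if_pos rfl] at hO
    exact (WithTop.top_ne_coe (a := m)) hO
  refine ⟨hf, ?_⟩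
  rw [OrdW_eq Q hf] at hO
  exact_mod_cast hO

/-- Representation invariance. -/
theorem rep (Q : Option K) {p q : K[X]} (hq : q ≠ 0) {f : RatFunc K} (hf : f ≠ 0)
    (h : f = algebraMap K[X] (RatFunc K) p / algebraMap K[X] (RatFunc K) q) :
    ordAt Q f = pord Q p - pord Q q ∧ rlc Q f = plc Q p / plc Q q := by
  have hp : p ≠ 0 := by
    rintro rfl
    rw [map_zero, zero_div] at h
    exact hf h
  have hcross : f.num * q = p * f.denom := by
    apply RatFunc.algebraMap_injective
    have h2 : algebraMap K[X] (RatFunc K) f.num / algebraMap K[X] (RatFunc K) f.denom =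
        algebraMap K[X] (RatFunc K) p / algebraMap K[X] (RatFunc K) q := by
      rw [RatFunc.num_div_denom, h]
    rw [div_eq_div_iff (RatFunc.algebraMap_ne_zero f.denom_ne_zero)
      (RatFunc.algebraMap_ne_zero hq)] at h2
    rw [map_mul, map_mul]
    exact h2
  have hnum := RatFunc.num_ne_zero hf
  have hden := f.denom_ne_zero
  have e1 : pord Q f.num + pord Q q = pord Q p + pord Q f.denom := by
    rw [← pord_mul Q hnum hq, ← pord_mul Q hp hden, hcross]
  have e2 : plc Q f.num * plc Q q = plc Q p * plc Q f.denom := by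
    rw [← plc_mul Q hnum hq, ← plc_mul Q hp hden, hcross]
  constructor
  · rw [ordAt_eq]; omega
  · rw [rlc, div_eq_div_iff (plc_ne_zero Q hden) (plc_ne_zero Q hq)]
    linear_combination e2

theorem mul_rep (Q : Option K) {f g : RatFunc K} (hf : f ≠ 0) (hg : g ≠ 0) :
    ordAt Q (f * g) = pord Q (f.num * g.num) - pord Q (f.denom * g.denom) ∧
    rlc Q (f * g) = plc Q (f.num * g.num) / plc Q (f.denom * g.denom) := by
  refine rep Q (mul_ne_zero f.denom_ne_zero g.denom_ne_zero) (mul_ne_zero hf hg) ?_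
  rw [map_mul, map_mul, ← div_mul_div_comm, RatFunc.num_div_denom, RatFunc.num_div_denom]

theorem ordAt_mul (Q : Option K) {f g : RatFunc K} (hf : f ≠ 0) (hg : g ≠ 0) :
    ordAt Q (f * g) = ordAt Q f + ordAt Q g := by
  have h := (mul_rep Q hf hg).1
  rw [h, pord_mul Q (RatFunc.num_ne_zero hf) (RatFunc.num_ne_zero hg),
    pord_mul Q f.denom_ne_zero g.denom_ne_zero, ordAt_eq, ordAt_eq]
  ring

theorem rlc_mul (Q : Option K) {f g : RatFunc K} (hf : f ≠ 0) (hg : g ≠ 0) :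
    rlc Q (f * g) = rlc Q f * rlc Q g := by
  have h := (mul_rep Q hf hg).2
  rw [h, plc_mul Q (RatFunc.num_ne_zero hf) (RatFunc.num_ne_zero hg),
    plc_mul Q f.denom_ne_zero g.denom_ne_zero, rlc, rlc, div_mul_div_comm]

theorem LC_mul' (Q : Option K) {f g : RatFunc K} (hf : f ≠ 0) (hg : g ≠ 0) (m : ℤ) :
    LC Q m (f * g) =
      if ordAt Q f + ordAt Q g = m then rlc Q f * rlc Q g else 0 := by
  have hfg : f * g ≠ 0 := mul_ne_zero hf hg
  by_cases h : ordAt Q f + ordAt Q g = m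
  · rw [if_pos h, LC_eq_of_ordAt hfg (by rw [ordAt_mul Q hf hg, h]), rlc_mul Q hf hg]
  · rw [if_neg h, LC_eq_zero_of_ne]
    rw [OrdW_eq Q hfg, ordAt_mul Q hf hg]
    exact_mod_cast h

/-- The key additivity lemma at the `RatFunc` level. -/
theorem radd (Q : Option K) (m : ℤ) {f g : RatFunc K}
    (hf : (m : WithTop ℤ) ≤ OrdW Q f) (hg : (m : WithTop ℤ) ≤ OrdW Q g) :
    (m : WithTop ℤ) ≤ OrdW Q (f + g) ∧ LC Q m (f + g) = LC Q m f + LC Q m g := by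
  rcases eq_or_ne f 0 with rfl | hf0
  · rw [zero_add]
    refine ⟨hg, ?_⟩
    rw [LC_eq_zero_of_ne (Q := Q) (m := m) (f := 0) ?_, zero_add]
    rw [OrdW, if_pos rfl]
    exact (WithTop.top_ne_coe (a := m))
  rcases eq_or_ne g 0 with rfl | hg0
  · rw [add_zero]
    refine ⟨hf, ?_⟩
    rw [LC_eq_zero_of_ne (Q := Q) (m := m) (f := 0) ?_, add_zero]
    rw [OrdW, if_pos rfl]
    exact (WithTop.top_ne_coe (a := m))
  -- both nonzero
  rw [OrdW_eq Q hf0] at hf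
  rw [OrdW_eq Q hg0] at hg
  replace hf : m ≤ ordAt Q f := by exact_mod_cast hf
  replace hg : m ≤ ordAt Q g := by exact_mod_cast hg
  set a := f.num * g.denom with ha_def
  set b := g.num * f.denom with hb_def
  set D := f.denom * g.denom with hD_def
  have hD : D ≠ 0 := mul_ne_zero f.denom_ne_zero g.denom_ne_zero
  have hsum : f + g = algebraMap K[X] (RatFunc K) (a + b) / algebraMap K[X] (RatFunc K) D := by
    rw [map_add]
    rw [← RatFunc.num_div_denom f, ← RatFunc.num_div_denom g]
    rw [div_add_div _ _ (RatFunc.algebraMap_ne_zero f.denom_ne_zero)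
      (RatFunc.algebraMap_ne_zero g.denom_ne_zero)]
    simp only [ha_def, hb_def, hD_def, map_mul]
    ring_nf
  set N := m + pord Q D with hN_def
  have hf' : m ≤ pord Q f.num - pord Q f.denom := by rw [← ordAt_eq]; exact hf
  have hg' : m ≤ pord Q g.num - pord Q g.denom := by rw [← ordAt_eq]; exact hg
  have hha : a = 0 ∨ N ≤ pord Q a := by
    right
    rw [ha_def, pord_mul Q (RatFunc.num_ne_zero hf0) g.denom_ne_zero, hN_def, hD_def,
      pord_mul Q f.denom_ne_zero g.denom_ne_zero]
    omega
  have hhb : b = 0 ∨ N ≤ pord Q b := by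
    right
    rw [hb_def, pord_mul Q (RatFunc.num_ne_zero hg0) f.denom_ne_zero, hN_def, hD_def,
      pord_mul Q f.denom_ne_zero g.denom_ne_zero]
    omega
  obtain ⟨hfst, hadd⟩ := padd Q N hha hhb
  -- auxiliary: LC of an element given by a representation x / D
  have key : ∀ (x : RatFunc K) (p : K[X]), (p = 0 ∨ N ≤ pord Q p) →
      x = algebraMap K[X] (RatFunc K) p / algebraMap K[X] (RatFunc K) D →
      LC Q m x = plcN Q N p / plc Q D := by
    intro x p hp hx
    rcases eq_or_ne p 0 with rfl | hp0
    · have : x = 0 := by rw [hx, map_zero, zero_div]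
      subst this
      rw [LC_eq_zero_of_ne (by rw [OrdW, if_pos rfl]; exact (WithTop.top_ne_coe (a := m))),
        plcN, if_neg (by rintro ⟨h, -⟩; exact h rfl), zero_div]
    · have hx0 : x ≠ 0 := by
        rw [hx]
        exact div_ne_zero (RatFunc.algebraMap_ne_zero hp0) (RatFunc.algebraMap_ne_zero hD)
      obtain ⟨ho, hl⟩ := rep Q hD hx0 hx
      by_cases hpN : pord Q p = N
      · rw [LC_eq_of_ordAt hx0 (by omega), hl, plcN, if_pos ⟨hp0, hpN⟩]
      · rw [LC_eq_zero_of_ne ?_, plcN, if_neg (by rintro ⟨-, h⟩; exact hpN h), zero_div]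
        rw [OrdW_eq Q hx0]
        intro hco
        have : ordAt Q x = m := by exact_mod_cast hco
        omega
  have hfrep : f = algebraMap K[X] (RatFunc K) a / algebraMap K[X] (RatFunc K) D := by
    rw [ha_def, hD_def, map_mul, map_mul]
    rw [mul_comm (algebraMap K[X] (RatFunc K) f.denom) _, ← div_div,
      mul_div_assoc, div_self (RatFunc.algebraMap_ne_zero g.denom_ne_zero), mul_one,
      RatFunc.num_div_denom]
  have hgrep : g = algebraMap K[X] (RatFunc K) b / algebraMap K[X] (RatFunc K) D := by
    rw [hb_def, hD_def, map_mul, map_mul, ← div_div, mul_div_assoc,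
      div_self (RatFunc.algebraMap_ne_zero f.denom_ne_zero), mul_one, RatFunc.num_div_denom]
  constructor
  · rcases eq_or_ne (f + g) 0 with hz | hz
    · rw [hz, OrdW, if_pos rfl]
      exact le_top
    · have hab : a + b ≠ 0 := by
        rintro h0
        exact hz (by rw [hsum, h0, map_zero, zero_div])
      have hle := hfst.resolve_left hab
      obtain ⟨ho, -⟩ := rep Q hD hz hsum
      rw [OrdW_eq Q hz]
      have hm : m ≤ ordAt Q (f + g) := by rw [ho]; omega
      exact_mod_cast hm
  · rw [key (f + g) (a + b) hfst hsum, key f a hha hfrep, key g b hhb hgrep, hadd, add_div]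

theorem lc_sum {ι : Type*} (Q : Option K) (m : ℤ) (s : Finset ι) (h : ι → RatFunc K)
    (H : ∀ i ∈ s, (m : WithTop ℤ) ≤ OrdW Q (h i)) :
    (m : WithTop ℤ) ≤ OrdW Q (∑ i ∈ s, h i) ∧
      LC Q m (∑ i ∈ s, h i) = ∑ i ∈ s, LC Q m (h i) := by
  classical
  induction s using Finset.cons_induction with
  | empty =>
      constructor
      · rw [Finset.sum_empty, OrdW, if_pos rfl]; exact le_top
      · rw [Finset.sum_empty, Finset.sum_empty, LC, if_neg]
        rw [OrdW, if_pos rfl]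
        exact WithTop.top_ne_coe
  | cons i s his ih =>
      rw [Finset.sum_cons, Finset.sum_cons]
      have h1 := H i (Finset.mem_cons_self _ _)
      obtain ⟨ho, hl⟩ := ih (fun j hj => H j (Finset.mem_cons_of_mem hj))
      obtain ⟨o, l⟩ := radd Q m h1 ho
      exact ⟨o, by rw [l, hl]⟩


end Stmt4Aux

open Stmt4Aux

instance Stmt4Aux.amaCoeFun {R M : Type*} [Semiring R] :
    CoeFun (AddMonoidAlgebra R M) (fun _ => M → R) := ⟨fun f => f.coeff⟩

abbrev AddMonoidAlgebra.support {R M : Type*} [Semiring R] (f : AddMonoidAlgebra R M) :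
    Finset M := f.coeff.support

/-- On `R = K(t)[M]` (with `M = ℤ^d`), the map defined on homogeneous elements by
`f·χ^u ↦ ψ(u) + ord_Q(f)·γ` and extended by taking the minimum over homogeneous
components is a valuation: it is multiplicative and satisfies the ultrametric inequality. -/
theorem stmt4 {K : Type*} [Field K] [IsAlgClosed K] {d : ℕ}
    {Γ : Type*} [AddCommGroup Γ] [LinearOrder Γ] [IsOrderedAddMonoid Γ]
    (ψ : (Fin d →₀ ℤ) →+ Γ) (Q : Option K) (γ : Γ) (hγ : 0 ≤ γ)
    (v : AddMonoidAlgebra (RatFunc K) (Fin d →₀ ℤ) → Γ)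
    (hv : ∀ f : AddMonoidAlgebra (RatFunc K) (Fin d →₀ ℤ), ∀ hf : f ≠ 0,
      v f = (f.coeff.support.inf' (Finsupp.support_nonempty_iff.mpr (mt AddMonoidAlgebra.coeff_eq_zero.mp hf))
        (fun u => ψ u + (ordAt Q (f.coeff u)) • γ))) :
    (∀ f g : AddMonoidAlgebra (RatFunc K) (Fin d →₀ ℤ),
        f ≠ 0 → g ≠ 0 → v (f * g) = v f + v g) ∧
    (∀ f g : AddMonoidAlgebra (RatFunc K) (Fin d →₀ ℤ),
        f ≠ 0 → g ≠ 0 → f + g ≠ 0 → min (v f) (v g) ≤ v (f + g)) := by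
  classical
  have mul_coeff : ∀ (f g : AddMonoidAlgebra (RatFunc K) (Fin d →₀ ℤ)) (w : Fin d →₀ ℤ),
      (f * g) w = ∑ p ∈ (f.support ×ˢ g.support).filter (fun p => p.1 + p.2 = w),
        f p.1 * g p.2 := by
    intro f g w
    rw [AddMonoidAlgebra.mul_apply]
    simp only [Finsupp.sum]
    rw [Finset.sum_filter, Finset.sum_product]
  have mul_coeffK : ∀ (f g : AddMonoidAlgebra K (Fin d →₀ ℤ)) (w : Fin d →₀ ℤ),
      (f * g) w = ∑ p ∈ (f.support ×ˢ g.support).filter (fun p => p.1 + p.2 = w),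
        f p.1 * g p.2 := by
    intro f g w
    rw [AddMonoidAlgebra.mul_apply]
    simp only [Finsupp.sum]
    rw [Finset.sum_filter, Finset.sum_product]
  have hle : ∀ (f : AddMonoidAlgebra (RatFunc K) (Fin d →₀ ℤ)) (hf : f ≠ 0),
      ∀ u ∈ f.support, v f ≤ ψ u + (ordAt Q (f u)) • γ := by
    intro f hf u hu
    rw [hv f hf]
    exact Finset.inf'_le _ hu
  have hex : ∀ (f : AddMonoidAlgebra (RatFunc K) (Fin d →₀ ℤ)) (hf : f ≠ 0),
      ∃ u ∈ f.support, v f = ψ u + (ordAt Q (f u)) • γ := by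
    intro f hf
    rw [hv f hf]
    exact Finset.exists_mem_eq_inf' _ _
  have hmin : ∀ (f : AddMonoidAlgebra (RatFunc K) (Fin d →₀ ℤ)) (hf : f ≠ 0) (c : Γ),
      (∀ u ∈ f.support, c ≤ ψ u + (ordAt Q (f u)) • γ) → c ≤ v f := by
    intro f hf c H
    rw [hv f hf]
    exact Finset.le_inf' _ _ H
  -- the `≥` direction for products
  have hgeq : ∀ (f g : AddMonoidAlgebra (RatFunc K) (Fin d →₀ ℤ)),
      f ≠ 0 → g ≠ 0 → v f + v g ≤ v (f * g) := by
    intro f g hf hg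
    have hfg : f * g ≠ 0 := mul_ne_zero hf hg
    refine hmin _ hfg _ ?_
    intro w hw
    have hwne : (f * g) w ≠ 0 := Finsupp.mem_support_iff.mp hw
    set T := (f.support ×ˢ g.support).filter (fun p => p.1 + p.2 = w) with hT
    have hTne : T.Nonempty := by
      rcases Finset.eq_empty_or_nonempty T with he | hne
      · exact absurd (by rw [mul_coeff f g w, ← hT, he, Finset.sum_empty]) hwne
      · exact hne
    obtain ⟨p0, hp0T, hm0⟩ := Finset.exists_mem_eq_inf' hTne (fun p => ordAt Q (f p.1 * g p.2))
    set m := T.inf' hTne (fun p => ordAt Q (f p.1 * g p.2)) with hmdef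
    obtain ⟨hp0mem, hp0sum⟩ := Finset.mem_filter.mp hp0T
    obtain ⟨hp01, hp02⟩ := Finset.mem_product.mp hp0mem
    have hf1 : f p0.1 ≠ 0 := Finsupp.mem_support_iff.mp hp01
    have hg2 : g p0.2 ≠ 0 := Finsupp.mem_support_iff.mp hp02
    have hOrd : (m : WithTop ℤ) ≤ OrdW Q ((f * g) w) := by
      rw [mul_coeff f g w, ← hT]
      refine (lc_sum Q m T _ ?_).1
      intro p hp
      obtain ⟨hpmem, hpsum⟩ := Finset.mem_filter.mp hp
      obtain ⟨h1, h2⟩ := Finset.mem_product.mp hpmem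
      have hne : f p.1 * g p.2 ≠ 0 :=
        mul_ne_zero (Finsupp.mem_support_iff.mp h1) (Finsupp.mem_support_iff.mp h2)
      rw [OrdW_eq Q hne]
      exact_mod_cast Finset.inf'_le _ hp
    have hOrd' : m ≤ ordAt Q ((f * g) w) := by
      rw [OrdW_eq Q hwne] at hOrd
      exact_mod_cast hOrd
    calc v f + v g
        ≤ (ψ p0.1 + (ordAt Q (f p0.1)) • γ) + (ψ p0.2 + (ordAt Q (g p0.2)) • γ) :=
          add_le_add (hle f hf _ hp01) (hle g hg _ hp02)
      _ = ψ w + (ordAt Q (f p0.1) + ordAt Q (g p0.2)) • γ := by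
          rw [← hp0sum, map_add, add_zsmul]; abel
      _ = ψ w + m • γ := by rw [← ordAt_mul Q hf1 hg2, hm0]
      _ ≤ ψ w + (ordAt Q ((f * g) w)) • γ :=
          add_le_add_right (zsmul_le_zsmul_left hγ hOrd') _
  constructor
  · -- multiplicativity
    intro f g hf hg
    have hfg : f * g ≠ 0 := mul_ne_zero hf hg
    refine le_antisymm ?_ (hgeq f g hf hg)
    rcases eq_or_lt_of_le hγ with hγ0 | hγpos
    · -- case γ = 0
      subst hγ0
      have hψle : ∀ (h : AddMonoidAlgebra (RatFunc K) (Fin d →₀ ℤ)) (hh : h ≠ 0),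
          ∀ u ∈ h.support, v h ≤ ψ u := by
        intro h hh u hu
        simpa using hle h hh u hu
      have hψex : ∀ (h : AddMonoidAlgebra (RatFunc K) (Fin d →₀ ℤ)) (hh : h ≠ 0),
          ∃ u ∈ h.support, v h = ψ u := by
        intro h hh
        obtain ⟨u, hu, he⟩ := hex h hh
        exact ⟨u, hu, by simpa using he⟩
      set F : AddMonoidAlgebra (RatFunc K) (Fin d →₀ ℤ) := AddMonoidAlgebra.ofCoeff (f.coeff.filter (fun u => ψ u = v f))
        with hF
      set G : AddMonoidAlgebra (RatFunc K) (Fin d →₀ ℤ) := AddMonoidAlgebra.ofCoeff (g.coeff.filter (fun u => ψ u = v g))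
        with hG
      have hFsupp : F.support = f.support.filter (fun u => ψ u = v f) := by
        rw [hF]; exact Finsupp.support_filter _ _
      have hGsupp : G.support = g.support.filter (fun u => ψ u = v g) := by
        rw [hG]; exact Finsupp.support_filter _ _
      have hFapp : ∀ u, ψ u = v f → F u = f u := by
        intro u hu
        rw [hF, Finsupp.filter_apply, if_pos hu]
      have hGapp : ∀ u, ψ u = v g → G u = g u := by
        intro u hu
        rw [hG, Finsupp.filter_apply, if_pos hu]
      obtain ⟨u0, hu0, he0⟩ := hψex f hf
      have hFne : F ≠ 0 := by
        intro h0
        apply Finsupp.mem_support_iff.mp hu0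
        rw [← hFapp u0 he0.symm, h0, AddMonoidAlgebra.coeff_zero, Finsupp.coe_zero, Pi.zero_apply]
      obtain ⟨u1, hu1, he1⟩ := hψex g hg
      have hGne : G ≠ 0 := by
        intro h0
        apply Finsupp.mem_support_iff.mp hu1
        rw [← hGapp u1 he1.symm, h0, AddMonoidAlgebra.coeff_zero, Finsupp.coe_zero, Pi.zero_apply]
      have hFG : F * G ≠ 0 := mul_ne_zero hFne hGne
      obtain ⟨w, hw⟩ := Finsupp.support_nonempty_iff.mpr (mt AddMonoidAlgebra.coeff_eq_zero.mp hFG)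
      have hwmem := AddMonoidAlgebra.support_coeff_mul_subset F G hw
      obtain ⟨a, ha, b, hb, hab⟩ := Finset.mem_add.mp hwmem
      rw [show F.coeff.support = _ from hFsupp, Finset.mem_filter] at ha
      rw [show G.coeff.support = _ from hGsupp, Finset.mem_filter] at hb
      have hψw : ψ w = v f + v g := by rw [← hab, map_add, ha.2, hb.2]
      have hFf : F.support ⊆ f.support := by
        rw [hFsupp]; exact Finset.filter_subset _ _
      have hGg : G.support ⊆ g.support := by
        rw [hGsupp]; exact Finset.filter_subset _ _
      have hkey : ∀ p : (Fin d →₀ ℤ) × (Fin d →₀ ℤ),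
          p ∈ (f.support ×ˢ g.support).filter (fun p => p.1 + p.2 = w) →
          ψ p.1 = v f ∧ ψ p.2 = v g := by
        intro p hp
        obtain ⟨hpmem, hpsum⟩ := Finset.mem_filter.mp hp
        obtain ⟨h1, h2⟩ := Finset.mem_product.mp hpmem
        have e : ψ p.1 + ψ p.2 = v f + v g := by rw [← map_add, hpsum, hψw]
        have l1 := hψle f hf p.1 h1
        have l2 := hψle g hg p.2 h2
        constructor
        · refine le_antisymm ?_ l1
          have h3 : ψ p.1 + v g ≤ ψ p.1 + ψ p.2 := add_le_add_right l2 _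
          rw [e] at h3
          exact le_of_add_le_add_right h3
        · refine le_antisymm ?_ l2
          have h3 : v f + ψ p.2 ≤ ψ p.1 + ψ p.2 := add_le_add_left l1 _
          rw [e] at h3
          exact le_of_add_le_add_left h3
      have hTeq : (f.support ×ˢ g.support).filter (fun p => p.1 + p.2 = w)
          = (F.support ×ˢ G.support).filter (fun p => p.1 + p.2 = w) := by
        ext p
        constructor
        · intro hp
          obtain ⟨c1, c2⟩ := hkey p hp
          obtain ⟨hpmem, hpsum⟩ := Finset.mem_filter.mp hp
          obtain ⟨h1, h2⟩ := Finset.mem_product.mp hpmem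
          refine Finset.mem_filter.mpr ⟨Finset.mem_product.mpr ⟨?_, ?_⟩, hpsum⟩
          · rw [hFsupp]; exact Finset.mem_filter.mpr ⟨h1, c1⟩
          · rw [hGsupp]; exact Finset.mem_filter.mpr ⟨h2, c2⟩
        · intro hp
          obtain ⟨hpmem, hpsum⟩ := Finset.mem_filter.mp hp
          obtain ⟨h1, h2⟩ := Finset.mem_product.mp hpmem
          exact Finset.mem_filter.mpr ⟨Finset.mem_product.mpr ⟨hFf h1, hGg h2⟩, hpsum⟩
      have hcw : (f * g) w = (F * G) w := by
        rw [mul_coeff f g w, mul_coeff F G w, hTeq]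
        refine Finset.sum_congr rfl ?_
        intro p hp
        rw [← hTeq] at hp
        obtain ⟨c1, c2⟩ := hkey p hp
        rw [hFapp p.1 c1, hGapp p.2 c2]
      have hwne' : (f * g) w ≠ 0 := by
        rw [hcw]; exact Finsupp.mem_support_iff.mp hw
      have hwsup : w ∈ (f * g).support := Finsupp.mem_support_iff.mpr hwne'
      calc v (f * g) ≤ ψ w + (ordAt Q ((f * g) w)) • (0 : Γ) := hle _ hfg w hwsup
        _ = ψ w := by simp
        _ = v f + v g := hψw
    · -- case 0 < γ
      set cF : (Fin d →₀ ℤ) → K :=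
        fun u => if ψ u + (ordAt Q (f u)) • γ = v f then rlc Q (f u) else 0 with hcF
      set cG : (Fin d →₀ ℤ) → K :=
        fun u => if ψ u + (ordAt Q (g u)) • γ = v g then rlc Q (g u) else 0 with hcG
      set F : AddMonoidAlgebra K (Fin d →₀ ℤ) :=
        ∑ u ∈ f.support, AddMonoidAlgebra.single u (cF u) with hFdef
      set G : AddMonoidAlgebra K (Fin d →₀ ℤ) :=
        ∑ u ∈ g.support, AddMonoidAlgebra.single u (cG u) with hGdef
      have hFapp : ∀ u', F u' = if u' ∈ f.support then cF u' else 0 := by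
        intro u'
        rw [hFdef, AddMonoidAlgebra.coeff_sum, Finsupp.finset_sum_apply]
        simp only [AddMonoidAlgebra.coeff_single, Finsupp.single_apply]
        exact Finset.sum_ite_eq' f.support u' cF
      have hGapp : ∀ u', G u' = if u' ∈ g.support then cG u' else 0 := by
        intro u'
        rw [hGdef, AddMonoidAlgebra.coeff_sum, Finsupp.finset_sum_apply]
        simp only [AddMonoidAlgebra.coeff_single, Finsupp.single_apply]
        exact Finset.sum_ite_eq' g.support u' cG
      obtain ⟨u0, hu0, he0⟩ := hex f hf
      have hF0 : F u0 = rlc Q (f u0) := by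
        rw [hFapp, if_pos hu0, hcF]
        exact if_pos he0.symm
      have hFne : F ≠ 0 := by
        intro h0
        apply rlc_ne_zero Q (Finsupp.mem_support_iff.mp hu0)
        rw [← hF0, h0, AddMonoidAlgebra.coeff_zero, Finsupp.coe_zero, Pi.zero_apply]
      obtain ⟨u1, hu1, he1⟩ := hex g hg
      have hG0 : G u1 = rlc Q (g u1) := by
        rw [hGapp, if_pos hu1, hcG]
        exact if_pos he1.symm
      have hGne : G ≠ 0 := by
        intro h0
        apply rlc_ne_zero Q (Finsupp.mem_support_iff.mp hu1)
        rw [← hG0, h0, AddMonoidAlgebra.coeff_zero, Finsupp.coe_zero, Pi.zero_apply]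
      have hFG : F * G ≠ 0 := mul_ne_zero hFne hGne
      obtain ⟨w, hw⟩ := Finsupp.support_nonempty_iff.mpr (mt AddMonoidAlgebra.coeff_eq_zero.mp hFG)
      set T := (f.support ×ˢ g.support).filter (fun p => p.1 + p.2 = w) with hT
      have hFsub : F.support ⊆ f.support := by
        intro u hu
        by_contra hun
        apply Finsupp.mem_support_iff.mp hu
        rw [hFapp, if_neg hun]
      have hGsub : G.support ⊆ g.support := by
        intro u hu
        by_contra hun
        apply Finsupp.mem_support_iff.mp hu
        rw [hGapp, if_neg hun]
      have hFGw : (F * G) w = ∑ p ∈ T, cF p.1 * cG p.2 := by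
        rw [mul_coeffK F G w]
        have hsub : (F.support ×ˢ G.support).filter (fun p => p.1 + p.2 = w) ⊆ T := by
          intro p hp
          obtain ⟨hpmem, hpsum⟩ := Finset.mem_filter.mp hp
          obtain ⟨h1, h2⟩ := Finset.mem_product.mp hpmem
          exact Finset.mem_filter.mpr ⟨Finset.mem_product.mpr ⟨hFsub h1, hGsub h2⟩, hpsum⟩
        rw [Finset.sum_subset hsub ?_]
        · refine Finset.sum_congr rfl ?_
          intro p hp
          obtain ⟨hpmem, hpsum⟩ := Finset.mem_filter.mp hp
          obtain ⟨h1, h2⟩ := Finset.mem_product.mp hpmem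
          rw [hFapp, if_pos h1, hGapp, if_pos h2]
        · intro p hpT hpn
          by_cases hp1 : F p.1 = 0
          · rw [hp1, zero_mul]
          by_cases hp2 : G p.2 = 0
          · rw [hp2, mul_zero]
          exfalso
          apply hpn
          obtain ⟨hpmem, hpsum⟩ := Finset.mem_filter.mp hpT
          exact Finset.mem_filter.mpr ⟨Finset.mem_product.mpr
            ⟨Finsupp.mem_support_iff.mpr hp1, Finsupp.mem_support_iff.mpr hp2⟩, hpsum⟩
      have hsumne : ∑ p ∈ T, cF p.1 * cG p.2 ≠ 0 := by
        rw [← hFGw]; exact Finsupp.mem_support_iff.mp hw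
      obtain ⟨p1, hp1T, hp1ne⟩ := Finset.exists_ne_zero_of_sum_ne_zero hsumne
      obtain ⟨hp1mem, hp1sum⟩ := Finset.mem_filter.mp hp1T
      obtain ⟨hp11, hp12⟩ := Finset.mem_product.mp hp1mem
      have hc1 : cF p1.1 ≠ 0 := left_ne_zero_of_mul hp1ne
      have hc2 : cG p1.2 ≠ 0 := right_ne_zero_of_mul hp1ne
      have hcond1 : ψ p1.1 + (ordAt Q (f p1.1)) • γ = v f := by
        by_contra hcon
        exact hc1 (by rw [hcF]; exact if_neg hcon)
      have hcond2 : ψ p1.2 + (ordAt Q (g p1.2)) • γ = v g := by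
        by_contra hcon
        exact hc2 (by rw [hcG]; exact if_neg hcon)
      set m := ordAt Q (f p1.1) + ordAt Q (g p1.2) with hm
      have hψm : ψ w + m • γ = v f + v g := by
        rw [← hp1sum, map_add, hm, add_zsmul, ← hcond1, ← hcond2]
        abel
      have hterm : ∀ p ∈ T, ((m : WithTop ℤ) ≤ OrdW Q (f p.1 * g p.2)) ∧
          LC Q m (f p.1 * g p.2) = cF p.1 * cG p.2 := by
        intro p hp
        obtain ⟨hpmem, hpsum⟩ := Finset.mem_filter.mp hp
        obtain ⟨h1, h2⟩ := Finset.mem_product.mp hpmem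
        have hf1 : f p.1 ≠ 0 := Finsupp.mem_support_iff.mp h1
        have hg1 : g p.2 ≠ 0 := Finsupp.mem_support_iff.mp h2
        have hl1 := hle f hf p.1 h1
        have hl2 := hle g hg p.2 h2
        have hval : (ψ p.1 + (ordAt Q (f p.1)) • γ) + (ψ p.2 + (ordAt Q (g p.2)) • γ)
            = ψ w + (ordAt Q (f p.1) + ordAt Q (g p.2)) • γ := by
          rw [← hpsum, map_add, add_zsmul]
          abel
        have hge : ψ w + m • γ ≤ ψ w + (ordAt Q (f p.1) + ordAt Q (g p.2)) • γ := by
          rw [hψm, ← hval]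
          exact add_le_add hl1 hl2
        have hmmp : m ≤ ordAt Q (f p.1) + ordAt Q (g p.2) :=
          (zsmul_le_zsmul_iff_left hγpos).mp (le_of_add_le_add_left hge)
        refine ⟨?_, ?_⟩
        · rw [OrdW_eq Q (mul_ne_zero hf1 hg1), ordAt_mul Q hf1 hg1]
          exact_mod_cast hmmp
        · rw [LC_mul' Q hf1 hg1 m]
          by_cases hpm : ordAt Q (f p.1) + ordAt Q (g p.2) = m
          · rw [if_pos hpm]
            have heq : (ψ p.1 + (ordAt Q (f p.1)) • γ) + (ψ p.2 + (ordAt Q (g p.2)) • γ)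
                = v f + v g := by
              rw [hval, hpm, hψm]
            have e1 : ψ p.1 + (ordAt Q (f p.1)) • γ = v f := by
              refine le_antisymm ?_ hl1
              have h3 : (ψ p.1 + (ordAt Q (f p.1)) • γ) + v g
                  ≤ (ψ p.1 + (ordAt Q (f p.1)) • γ) + (ψ p.2 + (ordAt Q (g p.2)) • γ) :=
                add_le_add_right hl2 _
              rw [heq] at h3
              exact le_of_add_le_add_right h3
            have e2 : ψ p.2 + (ordAt Q (g p.2)) • γ = v g := by
              refine le_antisymm ?_ hl2
              have h3 : v f + (ψ p.2 + (ordAt Q (g p.2)) • γ)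
                  ≤ (ψ p.1 + (ordAt Q (f p.1)) • γ) + (ψ p.2 + (ordAt Q (g p.2)) • γ) :=
                add_le_add_left hl1 _
              rw [heq] at h3
              exact le_of_add_le_add_left h3
            rw [show cF p.1 = rlc Q (f p.1) by rw [hcF]; exact if_pos e1,
              show cG p.2 = rlc Q (g p.2) by rw [hcG]; exact if_pos e2]
          · rw [if_neg hpm]
            by_cases e1 : ψ p.1 + (ordAt Q (f p.1)) • γ = v f
            · by_cases e2 : ψ p.2 + (ordAt Q (g p.2)) • γ = v g
              · exfalso
                apply hpm
                have h3 : ψ w + (ordAt Q (f p.1) + ordAt Q (g p.2)) • γ = ψ w + m • γ := by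
                  rw [← hval, e1, e2, hψm]
                exact (zsmul_left_inj hγpos).mp (add_left_cancel h3)
              · rw [show cG p.2 = 0 by rw [hcG]; exact if_neg e2, mul_zero]
            · rw [show cF p.1 = 0 by rw [hcF]; exact if_neg e1, zero_mul]
      obtain ⟨hOge, hLCs⟩ := lc_sum Q m T (fun p => f p.1 * g p.2) (fun p hp => (hterm p hp).1)
      have hLCw : LC Q m ((f * g) w) = ∑ p ∈ T, cF p.1 * cG p.2 := by
        rw [mul_coeff f g w, ← hT, hLCs]
        exact Finset.sum_congr rfl (fun p hp => (hterm p hp).2)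
      have hLCne : LC Q m ((f * g) w) ≠ 0 := by rw [hLCw]; exact hsumne
      obtain ⟨hwne, hword⟩ := ne_zero_of_LC hLCne
      have hwsup : w ∈ (f * g).support := Finsupp.mem_support_iff.mpr hwne
      calc v (f * g) ≤ ψ w + (ordAt Q ((f * g) w)) • γ := hle _ hfg w hwsup
        _ = ψ w + m • γ := by rw [hword]
        _ = v f + v g := hψm
  · -- ultrametric inequality
    intro f g hf hg hfg
    refine hmin _ hfg _ ?_
    intro w hw
    have hsum : (f + g) w = f w + g w := Finsupp.add_apply f.coeff g.coeff w
    have hne : (f + g) w ≠ 0 := Finsupp.mem_support_iff.mp hw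
    rcases eq_or_ne (f w) 0 with hfw | hfw
    · have hgw : (f + g) w = g w := by rw [hsum, hfw, zero_add]
      have hgw0 : g w ≠ 0 := by rw [← hgw]; exact hne
      calc min (v f) (v g) ≤ v g := min_le_right _ _
        _ ≤ ψ w + (ordAt Q (g w)) • γ := hle g hg w (Finsupp.mem_support_iff.mpr hgw0)
        _ = ψ w + (ordAt Q ((f + g) w)) • γ := by rw [hgw]
    rcases eq_or_ne (g w) 0 with hgw | hgw
    · have hfw' : (f + g) w = f w := by rw [hsum, hgw, add_zero]
      calc min (v f) (v g) ≤ v f := min_le_left _ _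
        _ ≤ ψ w + (ordAt Q (f w)) • γ := hle f hf w (Finsupp.mem_support_iff.mpr hfw)
        _ = ψ w + (ordAt Q ((f + g) w)) • γ := by rw [hfw']
    · set m := min (ordAt Q (f w)) (ordAt Q (g w)) with hm
      have h12 : (m : WithTop ℤ) ≤ OrdW Q ((f + g) w) := by
        rw [hsum]
        refine (radd Q m ?_ ?_).1
        · rw [OrdW_eq Q hfw]
          exact_mod_cast min_le_left _ _
        · rw [OrdW_eq Q hgw]
          exact_mod_cast min_le_right _ _
      have h12' : m ≤ ordAt Q ((f + g) w) := by
        rw [OrdW_eq Q hne] at h12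
        exact_mod_cast h12
      rcases le_total (ordAt Q (f w)) (ordAt Q (g w)) with hc | hc
      · have hmo : ordAt Q (f w) ≤ ordAt Q ((f + g) w) := by omega
        calc min (v f) (v g) ≤ v f := min_le_left _ _
          _ ≤ ψ w + (ordAt Q (f w)) • γ := hle f hf w (Finsupp.mem_support_iff.mpr hfw)
          _ ≤ ψ w + (ordAt Q ((f + g) w)) • γ :=
              add_le_add_right (zsmul_le_zsmul_left hγ hmo) _
      · have hmo : ordAt Q (g w) ≤ ordAt Q ((f + g) w) := by omega
        calc min (v f) (v g) ≤ v g := min_le_right _ _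
          _ ≤ ψ w + (ordAt Q (g w)) • γ := hle g hg w (Finsupp.mem_support_iff.mpr hgw)
          _ ≤ ψ w + (ordAt Q ((f + g) w)) • γ :=
              add_le_add_right (zsmul_le_zsmul_left hγ hmo) _
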